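/- Let N ≥ 4 and p > (N-1)/(N-3). Then there exists c > 0 such that the function u(x', x_N) = c·(1 + |x'|²)^{-1/(p-1)} on ℝ^N_+ (where x' ∈ ℝ^{N-1}) satisfies -Δu ≥ u^p in ℝ^N_+, u > 0 in ℝ^N_+, and ∂u/∂x_N ≡ 0. -/

import Mathlib

open Set Filter

/-- The Laplacian of `u : ℝ^N → ℝ`, as the sum of the second partial derivatives. -/
noncomputable def lap {N : ℕ} (u : EuclideanSpace ℝ (Fin N) → ℝ)
    (x : EuclideanSpace ℝ (Fin N)) : ℝ :=
  ∑ i, fderiv ℝ (fun y => fderiv ℝ u y (EuclideanSpace.single i 1)) x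
    (EuclideanSpace.single i 1)

noncomputable def sfun {N : ℕ} (lst : Fin N) (x : EuclideanSpace ℝ (Fin N)) : ℝ :=
  1 + ∑ i ∈ Finset.univ.erase lst, (x i) ^ 2

noncomputable def Dmap {N : ℕ} (lst : Fin N) (x : EuclideanSpace ℝ (Fin N)) :
    EuclideanSpace ℝ (Fin N) →L[ℝ] ℝ :=
  ∑ i ∈ Finset.univ.erase lst, (2 * x i) • EuclideanSpace.proj (𝕜 := ℝ) i

lemma one_le_sfun {N : ℕ} (lst : Fin N) (x : EuclideanSpace ℝ (Fin N)) : 1 ≤ sfun lst x :=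
  le_add_of_nonneg_right (Finset.sum_nonneg fun i _ => sq_nonneg (x i))

lemma sfun_pos {N : ℕ} (lst : Fin N) (x : EuclideanSpace ℝ (Fin N)) : 0 < sfun lst x :=
  lt_of_lt_of_le one_pos (one_le_sfun lst x)

lemma hasFDerivAt_sfun {N : ℕ} (lst : Fin N) (x : EuclideanSpace ℝ (Fin N)) :
    HasFDerivAt (sfun lst) (Dmap lst x) x := by
  unfold sfun Dmap
  have h : ∀ i ∈ Finset.univ.erase lst,
      HasFDerivAt (fun y : EuclideanSpace ℝ (Fin N) => (y i) ^ 2)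
        ((2 * x i) • EuclideanSpace.proj (𝕜 := ℝ) i) x := by
    intro i _
    have h1 : HasFDerivAt (fun y : EuclideanSpace ℝ (Fin N) => y i)
        (EuclideanSpace.proj (𝕜 := ℝ) i) x := (EuclideanSpace.proj (𝕜 := ℝ) i).hasFDerivAt
    have h2 := h1.mul h1
    have h3 : (fun y : EuclideanSpace ℝ (Fin N) => (y i) ^ 2) = (fun y => y i) * (fun y => y i) := by
      funext y; simp only [Pi.mul_apply]; ring
    rw [h3, two_mul, add_smul]
    exact h2
  exact (HasFDerivAt.fun_sum h).const_add 1

lemma Dmap_single {N : ℕ} (lst : Fin N) (x : EuclideanSpace ℝ (Fin N)) (j : Fin N) :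
    Dmap lst x (EuclideanSpace.single j 1) = if j = lst then 0 else 2 * x j := by
  unfold Dmap
  rw [ContinuousLinearMap.sum_apply]
  simp only [ContinuousLinearMap.smul_apply, PiLp.proj_apply, EuclideanSpace.single_apply,
    smul_eq_mul, mul_ite, mul_one, mul_zero]
  rw [Finset.sum_ite_eq' (Finset.univ.erase lst) j (fun i => 2 * x i)]
  simp [Finset.mem_erase]
lemma hasFDerivAt_rpow_sfun {N : ℕ} (lst : Fin N) (x : EuclideanSpace ℝ (Fin N)) (r : ℝ) :
    HasFDerivAt (fun y => sfun lst y ^ r) ((r * sfun lst x ^ (r - 1)) • Dmap lst x) x :=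
  (Real.hasDerivAt_rpow_const (Or.inl (sfun_pos lst x).ne')).comp_hasFDerivAt x
    (hasFDerivAt_sfun lst x)

lemma hasFDerivAt_u {N : ℕ} (lst : Fin N) (x : EuclideanSpace ℝ (Fin N)) (c α : ℝ) :
    HasFDerivAt (fun y => c * sfun lst y ^ (-α : ℝ))
      (c • ((-α * sfun lst x ^ (-α - 1)) • Dmap lst x)) x :=
  ((hasFDerivAt_rpow_sfun lst x (-α)).const_mul c)

lemma fderiv_u {N : ℕ} (lst : Fin N) (x : EuclideanSpace ℝ (Fin N)) (c α : ℝ) (j : Fin N) :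
    fderiv ℝ (fun y => c * sfun lst y ^ (-α : ℝ)) x (EuclideanSpace.single j 1)
      = if j = lst then 0 else c * (-α * sfun lst x ^ (-α - 1)) * (2 * x j) := by
  rw [(hasFDerivAt_u lst x c α).fderiv]
  simp only [ContinuousLinearMap.smul_apply, smul_eq_mul, Dmap_single]
  split_ifs <;> ring

lemma fderiv2_u {N : ℕ} (lst : Fin N) (x : EuclideanSpace ℝ (Fin N)) (c α : ℝ) (i : Fin N)
    (hi : i ≠ lst) :
    fderiv ℝ (fun y => fderiv ℝ (fun z => c * sfun lst z ^ (-α : ℝ)) y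
        (EuclideanSpace.single i 1)) x (EuclideanSpace.single i 1)
      = c * (-α * sfun lst x ^ (-α - 1)) * 2
        + (2 * x i) * (c * (-α * (((-α - 1) * sfun lst x ^ (-α - 1 - 1)) * (2 * x i)))) := by
  have heq : (fun y => fderiv ℝ (fun z => c * sfun lst z ^ (-α : ℝ)) y
      (EuclideanSpace.single i 1))
      = fun y => (c * (-α * sfun lst y ^ (-α - 1))) * (2 * y i) := by
    funext y; rw [fderiv_u, if_neg hi]
  rw [heq]
  have h1 : HasFDerivAt (fun y : EuclideanSpace ℝ (Fin N) => y i)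
      (EuclideanSpace.proj (𝕜 := ℝ) i) x := (EuclideanSpace.proj (𝕜 := ℝ) i).hasFDerivAt
  have hA : HasFDerivAt (fun y => c * (-α * sfun lst y ^ (-α - 1 : ℝ)))
      (c • ((-α) • (((-α - 1) * sfun lst x ^ (-α - 1 - 1)) • Dmap lst x))) x :=
    ((hasFDerivAt_rpow_sfun lst x (-α - 1)).const_mul (-α)).const_mul c
  have hB : HasFDerivAt (fun y : EuclideanSpace ℝ (Fin N) => 2 * y i)
      ((2 : ℝ) • EuclideanSpace.proj (𝕜 := ℝ) i) x := h1.const_mul 2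
  rw [(hA.fun_mul hB).fderiv]
  simp only [ContinuousLinearMap.add_apply, ContinuousLinearMap.smul_apply, smul_eq_mul,
    Dmap_single, if_neg hi, PiLp.proj_apply, EuclideanSpace.single_apply, eq_self_iff_true, if_true]
  ring

lemma lap_u {N : ℕ} (hN : 1 ≤ N) (lst : Fin N) (x : EuclideanSpace ℝ (Fin N)) (c α : ℝ) :
    lap (fun z => c * sfun lst z ^ (-α : ℝ)) x
      = ((N : ℝ) - 1) * (c * (-α * sfun lst x ^ (-α - 1)) * 2)
        + (4 * c * α * (α + 1) * sfun lst x ^ (-α - 1 - 1)) * (sfun lst x - 1) := by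
  unfold lap
  rw [← Finset.add_sum_erase _ _ (Finset.mem_univ lst)]
  have h0 : (fun y => fderiv ℝ (fun z => c * sfun lst z ^ (-α : ℝ)) y
      (EuclideanSpace.single lst 1)) = fun _ => (0 : ℝ) := by
    funext y; rw [fderiv_u, if_pos rfl]
  rw [h0]
  simp only [fderiv_fun_const, Pi.zero_apply, ContinuousLinearMap.zero_apply, zero_add]
  have h1 : ∀ i ∈ Finset.univ.erase lst,
      fderiv ℝ (fun y => fderiv ℝ (fun z => c * sfun lst z ^ (-α : ℝ)) y
        (EuclideanSpace.single i 1)) x (EuclideanSpace.single i 1)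
      = c * (-α * sfun lst x ^ (-α - 1)) * 2
        + (4 * c * α * (α + 1) * sfun lst x ^ (-α - 1 - 1)) * (x i) ^ 2 := by
    intro i hi
    rw [fderiv2_u lst x c α i (Finset.mem_erase.mp hi).1]
    ring
  rw [Finset.sum_congr rfl h1, Finset.sum_add_distrib, Finset.sum_const, ← Finset.mul_sum]
  have hcard : ((Finset.univ.erase lst).card : ℝ) = (N : ℝ) - 1 := by
    rw [Finset.card_erase_of_mem (Finset.mem_univ lst), Finset.card_univ, Fintype.card_fin]
    rw [Nat.cast_sub hN, Nat.cast_one]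
  have hsum : ∑ i ∈ Finset.univ.erase lst, (x i) ^ 2 = sfun lst x - 1 := by
    unfold sfun; ring
  rw [hsum]
  simp only [nsmul_eq_mul, hcard]

/-- For N ≥ 4 and p > (N-1)/(N-3), there is c > 0 such that
`u(x) = c (1 + |x'|²)^{-1/(p-1)}` (with `x'` the first N-1 coordinates) satisfies
`-Δu ≥ u^p` in the upper half-space, `u > 0` there, and `∂u/∂x_N ≡ 0`. -/
theorem stmt5 (N : ℕ) (hN : 4 ≤ N) (lst : Fin N) (hlst : (lst : ℕ) = N - 1)
    (p : ℝ) (hp : ((N : ℝ) - 1) / ((N : ℝ) - 3) < p) :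
    ∃ c : ℝ, 0 < c ∧
      ∀ u : EuclideanSpace ℝ (Fin N) → ℝ,
        (u = fun x =>
          c * (1 + ∑ i ∈ Finset.univ.erase lst, (x i) ^ 2) ^ (-(1 / (p - 1)) : ℝ)) →
        (∀ x : EuclideanSpace ℝ (Fin N), 0 < x lst → (u x) ^ p ≤ - lap u x) ∧
        (∀ x : EuclideanSpace ℝ (Fin N), 0 < x lst → 0 < u x) ∧
        (∀ x : EuclideanSpace ℝ (Fin N),
          fderiv ℝ u x (EuclideanSpace.single lst 1) = 0) := by
  have hN4 : (4 : ℝ) ≤ (N : ℝ) := by exact_mod_cast hN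
  have hN3 : (1 : ℝ) ≤ (N : ℝ) - 3 := by linarith
  have hp1 : 1 < p := by
    have h1 : 1 < ((N : ℝ) - 1) / ((N : ℝ) - 3) := by
      rw [lt_div_iff₀ (by linarith)]; linarith
    linarith
  have hpne : p - 1 ≠ 0 := by linarith
  set α : ℝ := 1 / (p - 1) with hα
  have hα0 : 0 < α := by rw [hα]; exact div_pos one_pos (by linarith)
  have h2α : 2 * α < (N : ℝ) - 3 := by
    rw [div_lt_iff₀ (by linarith : (0:ℝ) < (N:ℝ) - 3)] at hp
    rw [hα]
    rw [show 2 * (1 / (p - 1)) = 2 / (p - 1) by ring, div_lt_iff₀ (by linarith : (0:ℝ) < p - 1)]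
    nlinarith
  set K : ℝ := 2 * α * ((N : ℝ) - 3 - 2 * α) with hKdef
  have hK0 : 0 < K := by
    rw [hKdef]; apply mul_pos (by linarith) (by linarith)
  set c : ℝ := K ^ α with hc
  have hc0 : 0 < c := Real.rpow_pos_of_pos hK0 α
  refine ⟨c, hc0, ?_⟩
  intro u hu
  have hueq : u = fun x => c * sfun lst x ^ (-α : ℝ) := by
    rw [hu]; rfl
  have hαp : α * p = α + 1 := by
    rw [hα]; field_simp; ring
  have hcp : c ^ p = K * c := by
    rw [hc, ← Real.rpow_mul hK0.le, hαp, Real.rpow_add hK0, Real.rpow_one]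
    ring
  refine ⟨?_, ?_, ?_⟩
  · intro x _
    rw [hueq, lap_u (by omega : 1 ≤ N) lst x c α]
    simp only
    set S : ℝ := sfun lst x with hS
    have hS1 : 1 ≤ S := one_le_sfun lst x
    have hS0 : (0 : ℝ) < S := by linarith
    have hup : (c * S ^ (-α : ℝ)) ^ p = (K * c) * S ^ (-α - 1 : ℝ) := by
      rw [Real.mul_rpow hc0.le (Real.rpow_nonneg hS0.le _), ← Real.rpow_mul hS0.le,
        hcp, show (-α) * p = -α - 1 by linarith [hαp]]
    rw [hup]
    have hr2 : S ^ (-α - 1 - 1 : ℝ) = S ^ (-α - 1 : ℝ) * S⁻¹ := by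
      rw [show (-α - 1 - 1 : ℝ) = (-α - 1) + (-1) by ring, Real.rpow_add hS0,
        Real.rpow_neg_one]
    rw [hr2]
    set T : ℝ := S ^ (-α - 1 : ℝ) with hT
    have hT0 : 0 < T := Real.rpow_pos_of_pos hS0 _
    rw [show (4 * c * α * (α + 1) * (T * S⁻¹)) * (S - 1)
        = (4 * c * α * (α + 1) * T) * ((S - 1) * S⁻¹) by ring]
    set w : ℝ := (S - 1) * S⁻¹ with hw
    have hw0 : 0 ≤ w := by
      rw [hw]; exact mul_nonneg (by linarith) (inv_nonneg.mpr hS0.le)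
    have hw1 : w ≤ 1 := by
      rw [hw, mul_inv_le_iff₀ hS0]; linarith
    have h5 : 0 ≤ (c * T) * (4 * α * (α + 1) * (1 - w)) := by
      have h4 : (0:ℝ) ≤ 4 * α * (α + 1) := by nlinarith
      exact mul_nonneg (mul_pos hc0 hT0).le (mul_nonneg h4 (by linarith))
    rw [hKdef]
    nlinarith [h5]
  · intro x _
    rw [hueq]
    exact mul_pos hc0 (Real.rpow_pos_of_pos (sfun_pos lst x) _)
  · intro x
    rw [hueq, fderiv_u, if_pos rfl]
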